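/- Let X be a reflexive Banach space and let h ∈ Γ(X × X*) be a proper lower semicontinuous convex function. Then the function g(x, x*) := (1/2)(h(x, x*) + h*(x*, x)) is a representative function, i.e. g is lower semicontinuous convex and g(x, x*) ≥ ⟨x, x*⟩ for all (x, x*) ∈ X × X*, and moreover T_h = L(g), where T_h := {(x, x*) ∈ X × X* : (x*, x) ∈ ∂h(x, x*)} and L(g) := {(x, x*) : g(x, x*) = ⟨x, x*⟩}. -/

import Mathlib

open Filter Topology
noncomputable section
variable {X : Type*} [NormedAddCommGroup X] [NormedSpace ℝ X]

def pairing (p : X × StrongDual ℝ X) : ℝ := p.2 p.1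

def ConvexERealOn {E : Type*} [AddCommGroup E] [Module ℝ E] (f : E → EReal) : Prop :=
  ∀ x y : E, ∀ a b : ℝ, 0 ≤ a → 0 ≤ b → a + b = 1 →
    f (a • x + b • y) ≤ (a : EReal) * f x + (b : EReal) * f y

def IsGamma {E : Type*} [AddCommGroup E] [Module ℝ E] [TopologicalSpace E] (f : E → EReal) : Prop :=
  LowerSemicontinuous f ∧ ConvexERealOn f ∧ ∀ x, f x ≠ ⊥

def EpiConverges {E : Type*} [TopologicalSpace E] (fs : ℕ → E → EReal) (f : E → EReal) : Prop :=
  ∀ z : E,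
    (∃ zs : ℕ → E, Tendsto zs atTop (nhds z) ∧
      Tendsto (fun n => fs n (zs n)) atTop (nhds (f z))) ∧
    (∀ zs : ℕ → E, Tendsto zs atTop (nhds z) →
      f z ≤ Filter.liminf (fun n => fs n (zs n)) atTop)

def conjFn (f : X × StrongDual ℝ X → EReal) (q : StrongDual ℝ X × X) : EReal :=
  ⨆ p : X × StrongDual ℝ X, (((q.1 p.1 + p.2 q.2 : ℝ) : EReal) - f p)

def Lset (f : X × StrongDual ℝ X → EReal) : Set (X × StrongDual ℝ X) :=
  {p | f p = (pairing p : EReal)}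

def MonotoneSet (T : Set (X × StrongDual ℝ X)) : Prop :=
  ∀ p ∈ T, ∀ q ∈ T, 0 ≤ (q.2 - p.2) (q.1 - p.1)

def MaximalMonotone (T : Set (X × StrongDual ℝ X)) : Prop :=
  MonotoneSet T ∧ ∀ S : Set (X × StrongDual ℝ X), MonotoneSet S → T ⊆ S → S = T

def OpLiminf (Ts : ℕ → Set (X × StrongDual ℝ X)) : Set (X × StrongDual ℝ X) :=
  {p | ∃ zs : ℕ → X × StrongDual ℝ X, (∀ n, zs n ∈ Ts n) ∧ Tendsto zs atTop (nhds p)}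

def fitz (T : Set (X × StrongDual ℝ X)) (p : X × StrongDual ℝ X) : EReal :=
  ⨆ q ∈ T, (((p.2 - q.2) (q.1 - p.1) + p.2 p.1 : ℝ) : EReal)

open Classical in
def indic (T : Set (X × StrongDual ℝ X)) (p : X × StrongDual ℝ X) : EReal :=
  if p ∈ T then 0 else ⊤

def IsRepFunOf (g : X × StrongDual ℝ X → EReal) (T : Set (X × StrongDual ℝ X)) : Prop :=
  IsGamma g ∧ (∀ p, (pairing p : EReal) ≤ g p) ∧ ∀ p, (g p = (pairing p : EReal) ↔ p ∈ T)

def IsReflexive (X : Type*) [NormedAddCommGroup X] [NormedSpace ℝ X] : Prop :=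
  Function.Surjective (NormedSpace.inclusionInDoubleDual ℝ X)

def WeakTendstoProd (zs : ℕ → X × StrongDual ℝ X) (z : X × StrongDual ℝ X) : Prop :=
  (∀ g : StrongDual ℝ X, Tendsto (fun n => g (zs n).1) atTop (nhds (g z.1))) ∧
  (∀ G : StrongDual ℝ (StrongDual ℝ X),
    Tendsto (fun n => G (zs n).2) atTop (nhds (G z.2)))

def MoscoConverges (fs : ℕ → X × StrongDual ℝ X → EReal)
    (f : X × StrongDual ℝ X → EReal) : Prop :=
  ∀ z : X × StrongDual ℝ X,
    (∃ zs : ℕ → X × StrongDual ℝ X, Tendsto zs atTop (nhds z) ∧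
      Tendsto (fun n => fs n (zs n)) atTop (nhds (f z))) ∧
    (∀ zs : ℕ → X × StrongDual ℝ X, WeakTendstoProd zs z →
      f z ≤ Filter.liminf (fun n => fs n (zs n)) atTop)

def Tset (h : X × StrongDual ℝ X → EReal) : Set (X × StrongDual ℝ X) :=
  {p | ((2 * pairing p : ℝ) : EReal) = h p + conjFn h (p.2, p.1)}

/-! ### Auxiliary lemmas for STATEMENT 9 -/

lemma ereal_coe_mul_add (a : ℝ) (ha : 0 ≤ a) (u v : EReal) :
    (a : EReal) * (u + v) = (a : EReal) * u + (a : EReal) * v := by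
  rcases ha.eq_or_lt with h | h
  · simp [← h]
  · have ha' : (0 : EReal) < (a : EReal) := by exact_mod_cast h
    induction u <;> induction v <;>
      simp_all [EReal.mul_bot_of_pos ha', EReal.mul_top_of_pos ha',
        EReal.bot_add, EReal.add_bot, ← EReal.coe_add, ← EReal.coe_mul,
        EReal.top_add_of_ne_bot, EReal.add_top_of_ne_bot, mul_add]

lemma ereal_continuous_const_mul (a : ℝ) (ha : a ≠ 0) :
    Continuous (fun x : EReal => (a : EReal) * x) := by
  rw [continuous_iff_continuousAt]
  intro x
  have hne : (a : EReal) ≠ 0 := by exact_mod_cast ha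
  have := EReal.continuousAt_mul (p := ((a : EReal), x))
      (Or.inl hne) (Or.inl hne) (Or.inl (EReal.coe_ne_bot a)) (Or.inl (EReal.coe_ne_top a))
  exact this.comp ((continuous_const.prodMk continuous_id).continuousAt)

lemma ereal_monotone_const_mul (a : ℝ) (ha : 0 ≤ a) :
    Monotone (fun x : EReal => (a : EReal) * x) := fun u v huv =>
  mul_le_mul_of_nonneg_left huv (by exact_mod_cast ha)

lemma ereal_sub_const_continuous (c : EReal) :
    Continuous (fun r : ℝ => (r : EReal) - c) := by
  induction c with
  | bot =>
    simp only [sub_eq_add_neg, EReal.neg_bot]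
    exact continuous_const.congr fun r => by
      rw [EReal.add_top_of_ne_bot (EReal.coe_ne_bot r)]
  | coe c =>
    have : (fun r : ℝ => (r : EReal) - (c : EReal)) = fun r : ℝ => ((r - c : ℝ) : EReal) := by
      funext r; rw [EReal.coe_sub]
    rw [this]
    exact continuous_coe_real_ereal.comp (continuous_id.sub continuous_const)
  | top =>
    simp only [sub_eq_add_neg, EReal.neg_top]
    exact continuous_const.congr fun r => by rw [EReal.add_bot]

/-- Key Fenchel-type identity: `r = x + (r - x)` for real `x`. -/
lemma ereal_coe_add_sub (r x : ℝ) :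
    (r : EReal) = (x : EReal) + ((r : EReal) - (x : EReal)) := by
  rw [← EReal.coe_sub, ← EReal.coe_add]
  exact_mod_cast (by ring : r = x + (r - x))

/-- For proper `h ∈ Γ(X × X*)` on a reflexive Banach space,
`g(x,x*) := (1/2)(h(x,x*) + h*(x*,x))` is a representative function and `T_h = L(g)`. -/
theorem stmt9 [CompleteSpace X] (hrefl : IsReflexive X)
    (h : X × StrongDual ℝ X → EReal)
    (hh : IsGamma h) (hproper : ∃ p, h p ≠ ⊤) :
    LowerSemicontinuous (fun p : X × StrongDual ℝ X =>
        ((1 / 2 : ℝ) : EReal) * (h p + conjFn h (p.2, p.1))) ∧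
    ConvexERealOn (fun p : X × StrongDual ℝ X =>
        ((1 / 2 : ℝ) : EReal) * (h p + conjFn h (p.2, p.1))) ∧
    (∀ p : X × StrongDual ℝ X,
        (pairing p : EReal) ≤ ((1 / 2 : ℝ) : EReal) * (h p + conjFn h (p.2, p.1))) ∧
    Tset h = Lset (fun p : X × StrongDual ℝ X =>
        ((1 / 2 : ℝ) : EReal) * (h p + conjFn h (p.2, p.1))) := by
  obtain ⟨hlsc, hconv, hbot⟩ := hh
  obtain ⟨p0, hp0⟩ := hproper
  -- the conjugate dominates each affine minorant
  have conj_ge : ∀ q : StrongDual ℝ X × X, ∀ p' : X × StrongDual ℝ X,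
      (((q.1 p'.1 + p'.2 q.2 : ℝ) : EReal) - h p') ≤ conjFn h q := fun q p' =>
    le_iSup (fun p' : X × StrongDual ℝ X =>
      (((q.1 p'.1 + p'.2 q.2 : ℝ) : EReal) - h p')) p'
  have conj_ne_bot : ∀ q, conjFn h q ≠ ⊥ := by
    intro q
    have hc0 : ((h p0).toReal : EReal) = h p0 := EReal.coe_toReal hp0 (hbot p0)
    have h1 := conj_ge q p0
    rw [← hc0, ← EReal.coe_sub] at h1
    exact fun hb => ((EReal.bot_lt_coe _).trans_le h1).ne' (hb ▸ rfl)
  -- the key Fenchel inequality : 2⟨x,x*⟩ ≤ h p + h*(x*,x)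
  have key : ∀ p : X × StrongDual ℝ X,
      ((2 * pairing p : ℝ) : EReal) ≤ h p + conjFn h (p.2, p.1) := by
    intro p
    by_cases htop : h p = ⊤
    · rw [htop, EReal.top_add_of_ne_bot (conj_ne_bot _)]; exact le_top
    · have hcr : ((h p).toReal : EReal) = h p := EReal.coe_toReal htop (hbot p)
      have hterm : (((p.2 p.1 + p.2 p.1 : ℝ) : EReal) - h p) ≤ conjFn h (p.2, p.1) :=
        conj_ge (p.2, p.1) p
      have h2 : ((2 * pairing p : ℝ) : EReal)
          = h p + (((p.2 p.1 + p.2 p.1 : ℝ) : EReal) - h p) := by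
        rw [← hcr, ← EReal.coe_sub, ← EReal.coe_add]
        exact_mod_cast (by simp [pairing]; ring : (2 * pairing p : ℝ)
          = (h p).toReal + ((p.2 p.1 + p.2 p.1) - (h p).toReal))
      rw [h2]
      exact add_le_add_right hterm _
  have sum_ne_bot : ∀ p : X × StrongDual ℝ X, h p + conjFn h (p.2, p.1) ≠ ⊥ := by
    intro p hb
    rcases EReal.add_eq_bot_iff.1 hb with h1 | h1
    exacts [hbot p h1, conj_ne_bot _ h1]
  -- convexity of the composed conjugate
  have Fconv : ConvexERealOn (fun p : X × StrongDual ℝ X => conjFn h (p.2, p.1)) := by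
    intro x y a b ha hb hab
    refine iSup_le fun p' => ?_
    have lin : ((a • x + b • y).2 p'.1 + p'.2 (a • x + b • y).1 : ℝ)
        = a * (x.2 p'.1 + p'.2 x.1) + b * (y.2 p'.1 + p'.2 y.1) := by
      simp [Prod.smul_snd, Prod.smul_fst, map_add, map_smul, smul_eq_mul]
      ring
    by_cases hct : h p' = ⊤
    · have : (((a • x + b • y).2 p'.1 + p'.2 (a • x + b • y).1 : ℝ) : EReal) - h p' = ⊥ := by
        rw [hct]
        simp [sub_eq_add_neg, EReal.add_bot]
      rw [this]; exact bot_le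
    · have hcr : ((h p').toReal : EReal) = h p' := EReal.coe_toReal hct (hbot p')
      set γ := (h p').toReal with hγ
      have e1 : (((a • x + b • y).2 p'.1 + p'.2 (a • x + b • y).1 : ℝ) : EReal) - h p'
          = (a : EReal) * (((x.2 p'.1 + p'.2 x.1 - γ : ℝ)) : EReal)
            + (b : EReal) * (((y.2 p'.1 + p'.2 y.1 - γ : ℝ)) : EReal) := by
        rw [← hcr, ← EReal.coe_sub, ← EReal.coe_mul, ← EReal.coe_mul, ← EReal.coe_add]
        norm_cast
        rw [lin]
        linear_combination γ * hab
      rw [e1]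
      refine add_le_add (mul_le_mul_of_nonneg_left ?_ (by exact_mod_cast ha))
        (mul_le_mul_of_nonneg_left ?_ (by exact_mod_cast hb))
      · have : (((x.2 p'.1 + p'.2 x.1 - γ : ℝ)) : EReal)
            = ((x.2 p'.1 + p'.2 x.1 : ℝ) : EReal) - h p' := by
          rw [← hcr, ← EReal.coe_sub]
        rw [this]; exact conj_ge (x.2, x.1) p'
      · have : (((y.2 p'.1 + p'.2 y.1 - γ : ℝ)) : EReal)
            = ((y.2 p'.1 + p'.2 y.1 : ℝ) : EReal) - h p' := by
          rw [← hcr, ← EReal.coe_sub]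
        rw [this]; exact conj_ge (y.2, y.1) p'
  -- lower semicontinuity of the composed conjugate
  have Flsc : LowerSemicontinuous (fun p : X × StrongDual ℝ X => conjFn h (p.2, p.1)) := by
    have : (fun p : X × StrongDual ℝ X => conjFn h (p.2, p.1))
        = fun p : X × StrongDual ℝ X => ⨆ p' : X × StrongDual ℝ X,
            (((p.2 p'.1 + p'.2 p.1 : ℝ) : EReal) - h p') := rfl
    rw [this]
    refine lowerSemicontinuous_iSup fun p' => Continuous.lowerSemicontinuous ?_
    have c1 : Continuous fun p : X × StrongDual ℝ X => p.2 p'.1 :=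
      (ContinuousLinearMap.apply ℝ ℝ p'.1).continuous.comp continuous_snd
    have c2 : Continuous fun p : X × StrongDual ℝ X => p'.2 p.1 :=
      p'.2.continuous.comp continuous_fst
    exact (ereal_sub_const_continuous (h p')).comp (c1.add c2)
  have half_nonneg : (0 : ℝ) ≤ 1 / 2 := by norm_num
  have half_mul_two : ∀ r : ℝ, ((1 / 2 : ℝ) : EReal) * ((2 * r : ℝ) : EReal) = (r : EReal) := by
    intro r
    rw [← EReal.coe_mul]
    norm_cast
    ring
  refine ⟨?_, ?_, ?_, ?_⟩
  · -- lower semicontinuity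
    have sumlsc : LowerSemicontinuous
        (fun p : X × StrongDual ℝ X => h p + conjFn h (p.2, p.1)) :=
      hlsc.add' Flsc fun p =>
        EReal.continuousAt_add (Or.inr (conj_ne_bot _)) (Or.inl (hbot p))
    exact (ereal_continuous_const_mul (1 / 2) (by norm_num)).comp_lowerSemicontinuous
      sumlsc (ereal_monotone_const_mul (1 / 2) half_nonneg)
  · -- convexity
    intro x y a b ha hb hab
    have h1 := hconv x y a b ha hb hab
    have h2 := Fconv x y a b ha hb hab
    have h3 := ereal_monotone_const_mul (1 / 2) half_nonneg (add_le_add h1 h2)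
    refine h3.trans (le_of_eq ?_)
    beta_reduce
    have e4 : ∀ c : ℝ, 0 ≤ c → ∀ u v : EReal,
        ((1 / 2 : ℝ) : EReal) * ((c : EReal) * (u + v))
          = (c : EReal) * (((1 / 2 : ℝ) : EReal) * (u + v)) := by
      intro c hc u v
      rw [← mul_assoc, ← mul_assoc, mul_comm ((1 / 2 : ℝ) : EReal) (c : EReal)]
    rw [ereal_coe_mul_add _ half_nonneg]
    have eL : ((1 / 2 : ℝ) : EReal) * ((a : EReal) * h x + (b : EReal) * h y)
          + ((1 / 2 : ℝ) : EReal) * ((a : EReal) * conjFn h (x.2, x.1)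
            + (b : EReal) * conjFn h (y.2, y.1))
        = ((1 / 2 : ℝ) : EReal) * ((a : EReal) * (h x + conjFn h (x.2, x.1)))
          + ((1 / 2 : ℝ) : EReal) * ((b : EReal) * (h y + conjFn h (y.2, y.1))) := by
      rw [ereal_coe_mul_add _ half_nonneg, ereal_coe_mul_add _ half_nonneg,
        ereal_coe_mul_add a ha, ereal_coe_mul_add b hb,
        ereal_coe_mul_add _ half_nonneg, ereal_coe_mul_add _ half_nonneg]
      abel
    rw [eL, e4 a ha, e4 b hb]
  · -- Fenchel inequality
    intro p
    have h1 := ereal_monotone_const_mul (1 / 2) half_nonneg (key p)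
    beta_reduce at h1
    rw [half_mul_two (pairing p)] at h1
    exact h1
  · -- T_h = L(g)
    ext p
    simp only [Tset, Lset, Set.mem_setOf_eq]
    constructor
    · intro he
      rw [← he]
      exact half_mul_two (pairing p)
    · intro he
      by_cases hst : h p + conjFn h (p.2, p.1) = ⊤
      · rw [hst, EReal.coe_mul_top_of_pos (by norm_num : (0:ℝ) < 1/2)] at he
        exact absurd he.symm (EReal.coe_ne_top _)
      · have hcr : (((h p + conjFn h (p.2, p.1)).toReal : ℝ) : EReal)
            = h p + conjFn h (p.2, p.1) := EReal.coe_toReal hst (sum_ne_bot p)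
        rw [← hcr, ← EReal.coe_mul] at he
        have : (1 / 2 : ℝ) * (h p + conjFn h (p.2, p.1)).toReal = pairing p := by
          exact_mod_cast he
        rw [← hcr]
        exact_mod_cast (by linarith : (2 * pairing p : ℝ)
          = (h p + conjFn h (p.2, p.1)).toReal)
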